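/- If r ≥ 2, then the edge general position number of the r-dimensional hypercube satisfies gp_e(Q_r) = 2^r. -/

import Mathlib

open SimpleGraph

/-- A walk is a geodesic if its length equals the distance between its endpoints. -/
def IsGeodesic {V : Type*} (G : SimpleGraph V) {u v : V} (p : G.Walk u v) : Prop :=
  p.length = G.dist u v

/-- A set `S` of edges of `G` is an edge general position set if no geodesic of `G`
contains three (distinct) edges of `S`. -/
def IsEdgeGPSet {V : Type*} (G : SimpleGraph V) (S : Set (Sym2 V)) : Prop :=
  S ⊆ G.edgeSet ∧
  ∀ ⦃u v : V⦄ (p : G.Walk u v), IsGeodesic G p →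
    ∀ e₁ ∈ S, ∀ e₂ ∈ S, ∀ e₃ ∈ S,
      e₁ ∈ p.edges → e₂ ∈ p.edges → e₃ ∈ p.edges →
        e₁ = e₂ ∨ e₁ = e₃ ∨ e₂ = e₃

/-- The `r`-dimensional hypercube: vertices are functions `Fin r → Bool`, two vertices
are adjacent iff they differ in exactly one coordinate. -/
def hypercube (r : ℕ) : SimpleGraph (Fin r → Bool) where
  Adj x y := ∃! i, x i ≠ y i
  symm := by
    constructor
    rintro x y ⟨i, hi, hu⟩
    exact ⟨i, hi.symm, fun j hj => hu j hj.symm⟩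
  loopless := by
    constructor
    rintro x ⟨i, hi, -⟩
    exact hi rfl

namespace EGP

variable {r : ℕ}

abbrev V (r : ℕ) := Fin r → Bool

def flip (i : Fin r) (x : V r) : V r := Function.update x i (!x i)

@[simp] lemma flip_self (i : Fin r) (x : V r) : flip i x i = !(x i) :=
  Function.update_self _ _ _

lemma flip_ne {i j : Fin r} (h : j ≠ i) (x : V r) : flip i x j = x j :=
  Function.update_of_ne h _ _

@[simp] lemma flip_flip (i : Fin r) (x : V r) : flip i (flip i x) = x := by
  funext j
  by_cases h : j = i
  · subst h; simp
  · rw [flip_ne h, flip_ne h]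

lemma adj_flip (i : Fin r) (x : V r) : (hypercube r).Adj x (flip i x) := by
  refine ⟨i, by simp, fun j hj => ?_⟩
  by_contra h
  exact hj (by rw [flip_ne h])

def differsAt (i : Fin r) (e : Sym2 (V r)) : Bool :=
  Sym2.lift ⟨fun a b => xor (a i) (b i), fun a b => Bool.xor_comm _ _⟩ e

@[simp] lemma differsAt_mk (i : Fin r) (a b : V r) :
    differsAt i s(a, b) = xor (a i) (b i) := rfl

lemma differsAt_flip_edge {i j : Fin r} (x : V r) :
    differsAt j s(x, flip i x) = true ↔ j = i := by
  by_cases h : j = i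
  · subst h; simp
  · simp [flip_ne h, h]

lemma edge_rep {e : Sym2 (V r)} (he : e ∈ (hypercube r).edgeSet) :
    ∃ (x : V r) (i : Fin r), e = s(x, flip i x) := by
  induction e using Sym2.inductionOn with
  | hf a b =>
    obtain ⟨i, hi, hu⟩ := he
    refine ⟨a, i, ?_⟩
    have hb : b = flip i a := by
      funext j
      by_cases h : j = i
      · subst h
        cases hab : a j <;> cases hbb : b j <;> simp_all
      · rw [flip_ne h]
        by_contra hne
        exact h (hu j (Ne.symm hne))
    rw [hb]

end EGP

namespace EGP

lemma card_differsAt {e : Sym2 (V r)} (he : e ∈ (hypercube r).edgeSet) :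
    (Finset.univ.filter (fun i => differsAt i e = true)).card = 1 := by
  obtain ⟨x, i, rfl⟩ := edge_rep he
  rw [Finset.card_eq_one]
  refine ⟨i, ?_⟩
  ext j
  simp only [Finset.mem_filter, Finset.mem_univ, true_and, Finset.mem_singleton,
    differsAt_flip_edge]

lemma sum_countP (l : List (Sym2 (V r))) (hl : ∀ e ∈ l, e ∈ (hypercube r).edgeSet) :
    ∑ i : Fin r, l.countP (differsAt i) = l.length := by
  induction l with
  | nil => simp
  | cons e t ih =>
    have he : e ∈ (hypercube r).edgeSet := hl e List.mem_cons_self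
    have ht : ∀ e ∈ t, e ∈ (hypercube r).edgeSet := fun e' h => hl e' (List.mem_cons_of_mem _ h)
    simp only [List.countP_cons, Finset.sum_add_distrib, ih ht, List.length_cons]
    have h1 : (∑ i : Fin r, if differsAt i e = true then 1 else 0) = 1 := by
      rw [← Finset.card_filter]; exact card_differsAt he
    rw [h1]

lemma countP_pos {u v : V r} (p : (hypercube r).Walk u v) {j : Fin r} (h : u j ≠ v j) :
    (if u j ≠ v j then 1 else 0) ≤ p.edges.countP (differsAt j) := by
  rw [if_pos h]
  induction p with
  | nil => exact absurd rfl h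
  | @cons a b c hadj q ih =>
    simp only [SimpleGraph.Walk.edges_cons, List.countP_cons]
    by_cases hab : a j = b j
    · have : b j ≠ c j := by rw [← hab]; exact h
      have := ih this
      omega
    · have hd : differsAt j s(a, b) = true := by
        simp only [differsAt_mk]
        cases hx : a j <;> cases hy : b j <;> simp_all
      rw [hd]
      simp

def ham (u v : V r) : ℕ := (Finset.univ.filter (fun i => u i ≠ v i)).card

lemma ham_eq_sum (u v : V r) : ham u v = ∑ j : Fin r, if u j ≠ v j then 1 else 0 :=
  Finset.card_filter _ _

lemma indicator_le_countP {u v : V r} (p : (hypercube r).Walk u v) (j : Fin r) :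
    (if u j ≠ v j then 1 else 0) ≤ p.edges.countP (differsAt j) := by
  by_cases h : u j ≠ v j
  · exact countP_pos p h
  · rw [if_neg h]; omega

lemma ham_le_length {u v : V r} (p : (hypercube r).Walk u v) : ham u v ≤ p.length := by
  calc ham u v = ∑ j : Fin r, if u j ≠ v j then 1 else 0 := ham_eq_sum u v
    _ ≤ ∑ j : Fin r, p.edges.countP (differsAt j) :=
        Finset.sum_le_sum (fun j _ => indicator_le_countP p j)
    _ = p.edges.length := sum_countP _ (fun e he => p.edges_subset_edgeSet he)
    _ = p.length := p.length_edges

end EGP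

namespace EGP

def flips (l : List (Fin r)) (x : V r) : V r := l.foldl (fun v i => flip i v) x

@[simp] lemma flips_nil (x : V r) : flips [] x = x := rfl

@[simp] lemma flips_cons (i : Fin r) (t : List (Fin r)) (x : V r) :
    flips (i :: t) x = flips t (flip i x) := rfl

lemma flips_apply {l : List (Fin r)} (hl : l.Nodup) (x : V r) (j : Fin r) :
    flips l x j = if j ∈ l then !x j else x j := by
  induction l generalizing x with
  | nil => simp
  | cons i t ih =>
    have hit : i ∉ t := (List.nodup_cons.mp hl).1
    have ht : t.Nodup := (List.nodup_cons.mp hl).2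
    rw [flips_cons, ih ht]
    by_cases hj : j = i
    · subst hj
      simp [hit]
    · rw [flip_ne hj]
      simp [hj]

lemma flips_flips {l : List (Fin r)} (hl : l.Nodup) (x : V r) : flips l (flips l x) = x := by
  funext j
  rw [flips_apply hl, flips_apply hl]
  by_cases hj : j ∈ l <;> simp [hj]

def walkTo (x : V r) : (l : List (Fin r)) → (hypercube r).Walk x (flips l x)
  | [] => SimpleGraph.Walk.nil
  | i :: t => SimpleGraph.Walk.cons (adj_flip i x) (walkTo (flip i x) t)

@[simp] lemma walkTo_length (x : V r) (l : List (Fin r)) : (walkTo x l).length = l.length := by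
  induction l generalizing x with
  | nil => rfl
  | cons i t ih => simp [walkTo, ih]

lemma mem_walkTo_edges (l1 l2 : List (Fin r)) (i : Fin r) (x : V r) :
    s(flips l1 x, flip i (flips l1 x)) ∈ (walkTo x (l1 ++ i :: l2)).edges := by
  induction l1 generalizing x with
  | nil =>
    simp only [List.nil_append, flips_nil]
    exact List.mem_cons_self
  | cons j t ih =>
    simp only [List.cons_append, flips_cons]
    exact List.mem_cons_of_mem _ (ih (flip j x))

lemma dist_eq_ham (u v : V r) : (hypercube r).dist u v = ham u v := by
  classical
  set l : List (Fin r) := (List.finRange r).filter (fun i => u i != v i) with hldef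
  have hnd : l.Nodup := (List.nodup_finRange r).filter _
  have hmem : ∀ j : Fin r, j ∈ l ↔ u j ≠ v j := by
    intro j
    simp [hldef, List.mem_filter, List.mem_finRange]
  have hend : flips l u = v := by
    funext j
    rw [flips_apply hnd]
    by_cases hj : u j = v j
    · rw [if_neg (fun h => (hmem j).mp h hj)]
      exact hj
    · rw [if_pos ((hmem j).mpr hj)]
      cases hx : u j <;> cases hy : v j <;> simp_all
  have hlen : l.length = ham u v := by
    rw [← List.toFinset_card_of_nodup hnd, hldef, List.toFinset_filter, List.toFinset_finRange]
    unfold ham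
    congr 1
    ext j
    simp
  have hreach : (hypercube r).Reachable u v := by
    rw [← hend]; exact ⟨walkTo u l⟩
  refine le_antisymm ?_ ?_
  · have h := SimpleGraph.dist_le (walkTo u l)
    rw [walkTo_length, hend, hlen] at h
    exact h
  · obtain ⟨p, hp⟩ := hreach.exists_walk_length_eq_dist
    rw [← hp]
    exact ham_le_length p

lemma geodesic_countP_le_one {u v : V r} (p : (hypercube r).Walk u v)
    (hp : IsGeodesic (hypercube r) p) (j : Fin r) :
    p.edges.countP (differsAt j) ≤ 1 := by
  have hsum : ∑ i : Fin r, (if u i ≠ v i then 1 else 0) =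
      ∑ i : Fin r, p.edges.countP (differsAt i) := by
    rw [← ham_eq_sum, sum_countP _ (fun e he => p.edges_subset_edgeSet he),
      p.length_edges, hp, dist_eq_ham]
  have := (Finset.sum_eq_sum_iff_of_le (fun i _ => indicator_le_countP p i)).mp hsum j
    (Finset.mem_univ j)
  rw [← this]
  split <;> omega

lemma geodesic_eq_of_differsAt {u v : V r} {p : (hypercube r).Walk u v}
    (hp : IsGeodesic (hypercube r) p) {j : Fin r} {e₁ e₂ : Sym2 (V r)}
    (h1 : e₁ ∈ p.edges) (h2 : e₂ ∈ p.edges)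
    (hd1 : differsAt j e₁ = true) (hd2 : differsAt j e₂ = true) : e₁ = e₂ := by
  by_contra hne
  have hle := geodesic_countP_le_one p hp j
  rw [List.countP_eq_length_filter] at hle
  have hm1 : e₁ ∈ (p.edges.filter (differsAt j)).toFinset := by
    rw [List.mem_toFinset, List.mem_filter]; exact ⟨h1, hd1⟩
  have hm2 : e₂ ∈ (p.edges.filter (differsAt j)).toFinset := by
    rw [List.mem_toFinset, List.mem_filter]; exact ⟨h2, hd2⟩
  have : ({e₁, e₂} : Finset (Sym2 (V r))) ⊆ (p.edges.filter (differsAt j)).toFinset := by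
    intro e he
    rcases Finset.mem_insert.mp he with rfl | he
    · exact hm1
    · exact (Finset.mem_singleton.mp he) ▸ hm2
  have h2le : 2 ≤ (p.edges.filter (differsAt j)).toFinset.card := by
    rw [← Finset.card_pair hne]
    exact Finset.card_le_card this
  have := List.toFinset_card_le (p.edges.filter (differsAt j))
  omega

end EGP

namespace EGP

variable {i0 i1 : Fin r}

def g (i0 i1 : Fin r) (x : V r) : Sym2 (V r) :=
  if x i0 = x i1 then s(x, flip i0 x) else s(x, flip i1 x)

lemma g_mem_edgeSet (x : V r) : g i0 i1 x ∈ (hypercube r).edgeSet := by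
  unfold g
  split
  · exact (hypercube r).mem_edgeSet.mpr (adj_flip i0 x)
  · exact (hypercube r).mem_edgeSet.mpr (adj_flip i1 x)

lemma g_dir (x : V r) :
    ∃ k, (k = i0 ∨ k = i1) ∧ differsAt k (g i0 i1 x) = true := by
  unfold g
  split
  · exact ⟨i0, Or.inl rfl, by simp⟩
  · exact ⟨i1, Or.inr rfl, by simp⟩

lemma g_injective (h01 : i0 ≠ i1) : Function.Injective (g i0 i1) := by
  intro x y h
  unfold g at h
  by_cases hx : x i0 = x i1 <;> by_cases hy : y i0 = y i1
  · rw [if_pos hx, if_pos hy] at h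
    rcases Sym2.eq_iff.mp h with ⟨h1, _⟩ | ⟨h1, h2⟩
    · exact h1
    · exfalso
      have e0 := congrFun h1 i0
      have e1 := congrFun h1 i1
      rw [flip_self] at e0
      rw [flip_ne (Ne.symm h01)] at e1
      rw [e0, e1, ← hy] at hx
      simp at hx
  · rw [if_pos hx, if_neg hy] at h
    exfalso
    rcases Sym2.eq_iff.mp h with ⟨h1, h2⟩ | ⟨h1, h2⟩
    · subst h1
      have e0 := congrFun h2 i0
      rw [flip_self, flip_ne h01] at e0
      simp at e0
    · have e0 := congrFun h2 i0
      have e1 := congrFun h1 i0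
      rw [flip_self] at e0
      rw [flip_ne h01] at e1
      rw [← e1] at e0
      simp at e0
  · rw [if_neg hx, if_pos hy] at h
    exfalso
    rcases Sym2.eq_iff.mp h with ⟨h1, h2⟩ | ⟨h1, h2⟩
    · subst h1
      have e0 := congrFun h2 i1
      rw [flip_self, flip_ne (Ne.symm h01)] at e0
      simp at e0
    · have e0 := congrFun h2 i1
      have e1 := congrFun h1 i1
      rw [flip_self] at e0
      rw [flip_ne (Ne.symm h01)] at e1
      rw [← e1] at e0
      simp at e0
  · rw [if_neg hx, if_neg hy] at h
    rcases Sym2.eq_iff.mp h with ⟨h1, _⟩ | ⟨h1, h2⟩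
    · exact h1
    · exfalso
      have e0 := congrFun h1 i0
      have e1 := congrFun h1 i1
      rw [flip_ne h01] at e0
      rw [flip_self] at e1
      rw [e0, e1] at hx
      cases hb0 : y i0 <;> cases hb1 : y i1 <;> simp [hb0, hb1] at hx hy

lemma gp_range_g (h01 : i0 ≠ i1) : IsEdgeGPSet (hypercube r) (Set.range (g i0 i1)) := by
  constructor
  · rintro e ⟨x, rfl⟩
    exact g_mem_edgeSet x
  · intro u v p hp e₁ he₁ e₂ he₂ e₃ he₃ hm₁ hm₂ hm₃
    have key : ∀ (j : Fin r) (a b : Sym2 (V r)), a ∈ p.edges → b ∈ p.edges →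
        differsAt j a = true → differsAt j b = true → a = b :=
      fun j a b ha hb hda hdb => geodesic_eq_of_differsAt hp ha hb hda hdb
    obtain ⟨x₁, hx₁⟩ := he₁
    obtain ⟨x₂, hx₂⟩ := he₂
    obtain ⟨x₃, hx₃⟩ := he₃
    obtain ⟨k₁, hk₁, hd₁⟩ := g_dir (i0 := i0) (i1 := i1) x₁
    obtain ⟨k₂, hk₂, hd₂⟩ := g_dir (i0 := i0) (i1 := i1) x₂
    obtain ⟨k₃, hk₃, hd₃⟩ := g_dir (i0 := i0) (i1 := i1) x₃
    rw [hx₁] at hd₁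
    rw [hx₂] at hd₂
    rw [hx₃] at hd₃
    rcases hk₁ with rfl | rfl <;> rcases hk₂ with rfl | rfl <;> rcases hk₃ with rfl | rfl <;>
      first
        | exact Or.inl (key _ e₁ e₂ hm₁ hm₂ hd₁ hd₂)
        | exact Or.inr (Or.inl (key _ e₁ e₃ hm₁ hm₃ hd₁ hd₃))
        | exact Or.inr (Or.inr (key _ e₂ e₃ hm₂ hm₃ hd₂ hd₃))

lemma ncard_range_g (h01 : i0 ≠ i1) : (Set.range (g i0 i1)).ncard = 2 ^ r := by
  rw [← Set.image_univ, Set.ncard_image_of_injective _ (g_injective h01), Set.ncard_univ,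
    Nat.card_eq_fintype_card]
  simp [Fintype.card_fun]

end EGP

namespace EGP

lemma walkTo_finRange_geodesic (x : V r) :
    IsGeodesic (hypercube r) (walkTo x (List.finRange r)) := by
  show (walkTo x (List.finRange r)).length = _
  rw [walkTo_length, List.length_finRange, dist_eq_ham]
  unfold ham
  have : ∀ j : Fin r, x j ≠ flips (List.finRange r) x j := by
    intro j
    rw [flips_apply (List.nodup_finRange r), if_pos (List.mem_finRange j)]
    cases x j <;> simp
  rw [Finset.filter_true_of_mem (fun j _ => this j)]
  simp

lemma two_mem_paths {e : Sym2 (V r)} (he : e ∈ (hypercube r).edgeSet) :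
    ∃ x y : V r, x ≠ y ∧ e ∈ (walkTo x (List.finRange r)).edges ∧
      e ∈ (walkTo y (List.finRange r)).edges := by
  obtain ⟨u, i, rfl⟩ := edge_rep he
  obtain ⟨l1, l2, hsplit⟩ := List.append_of_mem (List.mem_finRange i)
  have hnd : (List.finRange r).Nodup := List.nodup_finRange r
  rw [hsplit] at hnd
  obtain ⟨hl1, _, hdisj⟩ := List.nodup_append'.mp hnd
  have hil1 : i ∉ l1 := fun hi => hdisj hi List.mem_cons_self
  refine ⟨flips l1 u, flips l1 (flip i u), ?_, ?_, ?_⟩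
  · intro hxy
    have := congrFun hxy i
    rw [flips_apply hl1, flips_apply hl1, if_neg hil1, if_neg hil1, flip_self] at this
    cases u i <;> simp_all
  · have h := mem_walkTo_edges l1 l2 i (flips l1 u)
    rw [flips_flips hl1, ← hsplit] at h
    exact h
  · have h := mem_walkTo_edges l1 l2 i (flips l1 (flip i u))
    rw [flips_flips hl1, flip_flip, ← hsplit] at h
    rw [Sym2.eq_swap] at h
    exact h

lemma ncard_le (S : Set (Sym2 (V r))) (hS : IsEdgeGPSet (hypercube r) S) :
    S.ncard ≤ 2 ^ r := by
  classical
  have hfin : S.Finite := Set.toFinite S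
  set T := hfin.toFinset with hT
  have hmemT : ∀ e, e ∈ T ↔ e ∈ S := fun e => hfin.mem_toFinset
  have le_two : ∀ x : V r,
      (T.filter (fun e => e ∈ (walkTo x (List.finRange r)).edges)).card ≤ 2 := by
    intro x
    by_contra hlt
    push_neg at hlt
    obtain ⟨a, b, c, ha, hb, hc, hab, hac, hbc⟩ := Finset.two_lt_card_iff.mp hlt
    obtain ⟨haT, hae⟩ := Finset.mem_filter.mp ha
    obtain ⟨hbT, hbe⟩ := Finset.mem_filter.mp hb
    obtain ⟨hcT, hce⟩ := Finset.mem_filter.mp hc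
    rcases hS.2 (walkTo x (List.finRange r)) (walkTo_finRange_geodesic x)
      a ((hmemT a).mp haT) b ((hmemT b).mp hbT) c ((hmemT c).mp hcT) hae hbe hce with
      h | h | h
    · exact hab h
    · exact hac h
    · exact hbc h
  have two_le : ∀ e ∈ T,
      2 ≤ (Finset.univ.filter
        (fun x : V r => e ∈ (walkTo x (List.finRange r)).edges)).card := by
    intro e heT
    obtain ⟨x, y, hxy, hx, hy⟩ := two_mem_paths (hS.1 ((hmemT e).mp heT))
    have hsub : ({x, y} : Finset (V r)) ⊆
        Finset.univ.filter (fun x : V r => e ∈ (walkTo x (List.finRange r)).edges) := by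
      intro z hz
      rcases Finset.mem_insert.mp hz with rfl | hz
      · exact Finset.mem_filter.mpr ⟨Finset.mem_univ _, hx⟩
      · rw [Finset.mem_singleton] at hz
        subst hz
        exact Finset.mem_filter.mpr ⟨Finset.mem_univ _, hy⟩
    calc 2 = ({x, y} : Finset (V r)).card := (Finset.card_pair hxy).symm
      _ ≤ _ := Finset.card_le_card hsub
  have hcount : 2 * T.card ≤ 2 ^ r * 2 := by
    calc 2 * T.card = ∑ _e ∈ T, 2 := by rw [Finset.sum_const, smul_eq_mul, mul_comm]
      _ ≤ ∑ e ∈ T, (Finset.univ.filter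
            (fun x : V r => e ∈ (walkTo x (List.finRange r)).edges)).card :=
          Finset.sum_le_sum two_le
      _ = ∑ e ∈ T, ∑ x : V r, (if e ∈ (walkTo x (List.finRange r)).edges then 1 else 0) :=
          Finset.sum_congr rfl (fun e _ => Finset.card_filter _ _)
      _ = ∑ x : V r, ∑ e ∈ T, (if e ∈ (walkTo x (List.finRange r)).edges then 1 else 0) :=
          Finset.sum_comm
      _ = ∑ x : V r, (T.filter (fun e => e ∈ (walkTo x (List.finRange r)).edges)).card :=
          Finset.sum_congr rfl (fun x _ => (Finset.card_filter _ _).symm)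
      _ ≤ ∑ _x : V r, 2 := Finset.sum_le_sum (fun x _ => le_two x)
      _ = 2 ^ r * 2 := by
          rw [Finset.sum_const, smul_eq_mul, Finset.card_univ, Fintype.card_fun]
          simp
  rw [Set.ncard_eq_toFinset_card S hfin, ← hT]
  omega

end EGP


/-- If `r ≥ 2`, then the edge general position number of the `r`-dimensional hypercube `Q_r`
equals `2^r`. -/
theorem egp_hypercube (r : ℕ) (hr : 2 ≤ r) :
    IsGreatest
      {k : ℕ | ∃ S : Set (Sym2 (Fin r → Bool)), IsEdgeGPSet (hypercube r) S ∧ S.ncard = k}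
      (2 ^ r) := by
  constructor
  · have h01 : (⟨0, by omega⟩ : Fin r) ≠ ⟨1, by omega⟩ := by simp
    exact ⟨Set.range (EGP.g ⟨0, by omega⟩ ⟨1, by omega⟩),
      EGP.gp_range_g h01, EGP.ncard_range_g h01⟩
  · rintro k ⟨S, hS, rfl⟩
    exact EGP.ncard_le S hS
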